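/- There exists a K_8-minor-free graph that is not 8-choosable. (Hence the List Hadwiger Conjecture, asserting every K_t-minor-free graph is t-choosable, fails for t = 8.) -/

import Mathlib

open SimpleGraph

/-- `H` is a minor of `G`, witnessed by disjoint nonempty connected branch sets in `G`
with an edge of `G` between the branch sets of any two adjacent vertices of `H`. -/
def HasMinor {V : Type*} {W : Type*} (G : SimpleGraph V) (H : SimpleGraph W) : Prop :=
  ∃ B : W → Set V,
    (∀ w, (B w).Nonempty) ∧
    (∀ w, (G.induce (B w)).Connected) ∧
    (Pairwise fun w₁ w₂ => Disjoint (B w₁) (B w₂)) ∧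
    (∀ ⦃w₁ w₂⦄, H.Adj w₁ w₂ → ∃ v₁ ∈ B w₁, ∃ v₂ ∈ B w₂, G.Adj v₁ v₂)

/-- `G` is `k`-choosable: for every list assignment with lists of size at least `k`,
there is a proper colouring of `G` from the lists. -/
def Choosable {V : Type*} (G : SimpleGraph V) (k : ℕ) : Prop :=
  ∀ L : V → Finset ℕ, (∀ v, k ≤ (L v).card) →
    ∃ C : V → ℕ, (∀ v, C v ∈ L v) ∧ ∀ ⦃u v⦄, G.Adj u v → C u ≠ C v

/-- `G` is `d`-degenerate: every (finite) nonempty induced subgraph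
has a vertex of degree at most `d`. -/
def Degenerate {V : Type*} (G : SimpleGraph V) (d : ℕ) : Prop :=
  ∀ s : Finset V, s.Nonempty → ∃ v ∈ s, ({u ∈ (s : Set V) | G.Adj v u}).ncard ≤ d

/-- The complete multipartite graph `K_{r×2}`: `r` parts each of size two,
i.e. `K_{2r}` minus a perfect matching. `v_i = (i,0)` and `w_i = (i,1)`. -/
def Krx2 (r : ℕ) : SimpleGraph (Fin r × Fin 2) :=
  SimpleGraph.fromRel (fun a b => a.1 ≠ b.1)

abbrev Idx8 : Type := Fin 5 → Fin 8
abbrev V8 : Type := Fin 5 ⊕ (Idx8 × Fin 5)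

def adj8 : V8 → V8 → Prop
  | Sum.inl i, Sum.inl j => i ≠ j
  | Sum.inl i, Sum.inr p => p.2 ≠ i
  | Sum.inr p, Sum.inl i => p.2 ≠ i
  | Sum.inr p, Sum.inr q => p.1 = q.1 ∧ p.2 ≠ q.2

def G8 : SimpleGraph V8 where
  Adj := adj8
  symm := by
    constructor
    rintro (i | p) (j | q) h
    · exact Ne.symm h
    · exact h
    · exact h
    · exact ⟨h.1.symm, h.2.symm⟩
  loopless := by
    constructor
    rintro (i | p) h
    · exact h rfl
    · exact h.2 rfl

@[simp] lemma G8_adj_ll {i j : Fin 5} : G8.Adj (Sum.inl i) (Sum.inl j) ↔ i ≠ j := Iff.rfl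
@[simp] lemma G8_adj_lr {i : Fin 5} {p : Idx8 × Fin 5} :
    G8.Adj (Sum.inl i) (Sum.inr p) ↔ p.2 ≠ i := Iff.rfl
@[simp] lemma G8_adj_rl {i : Fin 5} {p : Idx8 × Fin 5} :
    G8.Adj (Sum.inr p) (Sum.inl i) ↔ p.2 ≠ i := Iff.rfl
@[simp] lemma G8_adj_rr {p q : Idx8 × Fin 5} :
    G8.Adj (Sum.inr p) (Sum.inr q) ↔ p.1 = q.1 ∧ p.2 ≠ q.2 := Iff.rfl

def enc (i : Fin 5) (a : Fin 8) : ℕ := 8 * i.1 + a.1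

lemma enc_inj {i j : Fin 5} {a b : Fin 8} (h : enc i a = enc j b) : i = j ∧ a = b := by
  unfold enc at h
  have hi := i.2; have hj := j.2; have ha := a.2; have hb := b.2
  constructor
  · exact Fin.ext (by omega)
  · exact Fin.ext (by omega)

def Xset : Finset ℕ := {40, 41, 42, 43}

def L8 : V8 → Finset ℕ
  | Sum.inl i => Finset.image (fun a : Fin 8 => enc i a) Finset.univ
  | Sum.inr (t, i) => Finset.image (fun j => enc j (t j)) (Finset.univ.erase i) ∪ Xset

lemma L8_card : ∀ v : V8, 8 ≤ (L8 v).card := by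
  rintro (i | ⟨t, i⟩)
  · rw [show L8 (Sum.inl i) = Finset.image (fun a : Fin 8 => enc i a) Finset.univ from rfl]
    rw [Finset.card_image_of_injective _ (fun a b h => (enc_inj h).2)]
    simp
  · rw [show L8 (Sum.inr (t, i)) =
      Finset.image (fun j => enc j (t j)) (Finset.univ.erase i) ∪ Xset from rfl]
    have hdisj : Disjoint (Finset.image (fun j => enc j (t j)) (Finset.univ.erase i)) Xset := by
      rw [Finset.disjoint_left]
      intro a ha hx
      simp only [Finset.mem_image] at ha
      obtain ⟨j, _, rfl⟩ := ha
      have hj := j.2; have htj := (t j).2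
      have h40 : enc j (t j) < 40 := by unfold enc; omega
      simp only [Xset, Finset.mem_insert, Finset.mem_singleton] at hx
      omega
    rw [Finset.card_union_of_disjoint hdisj]
    rw [Finset.card_image_of_injOn (fun a _ b _ h => (enc_inj h).1)]
    rw [Finset.card_erase_of_mem (Finset.mem_univ i)]
    simp [Xset]

lemma not_choosable8 : ¬ Choosable G8 8 := by
  intro h
  obtain ⟨C, hC, hCp⟩ := h L8 L8_card
  have hcore : ∀ i : Fin 5, ∃ a : Fin 8, C (Sum.inl i) = enc i a := by
    intro i
    have hm := hC (Sum.inl i)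
    rw [show L8 (Sum.inl i) = Finset.image (fun a : Fin 8 => enc i a) Finset.univ from rfl] at hm
    simp only [Finset.mem_image, Finset.mem_univ, true_and] at hm
    obtain ⟨a, ha⟩ := hm
    exact ⟨a, ha.symm⟩
  choose t ht using hcore
  have hcopy : ∀ i : Fin 5, C (Sum.inr (t, i)) ∈ Xset := by
    intro i
    have hm := hC (Sum.inr (t, i))
    rw [show L8 (Sum.inr (t, i)) =
      Finset.image (fun j => enc j (t j)) (Finset.univ.erase i) ∪ Xset from rfl] at hm
    rw [Finset.mem_union] at hm
    rcases hm with hm | hm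
    · exfalso
      simp only [Finset.mem_image, Finset.mem_erase, Finset.mem_univ, and_true] at hm
      obtain ⟨j, hji, hj⟩ := hm
      have hadj : G8.Adj (Sum.inr (t, i)) (Sum.inl j) := by simp; exact fun hc => hji hc.symm
      exact hCp hadj (by rw [hj.symm, ht j])
    · exact hm
  have hinj : Function.Injective (fun i : Fin 5 => C (Sum.inr (t, i))) := by
    intro i i' hii
    by_contra hne
    exact hCp (show G8.Adj (Sum.inr (t, i)) (Sum.inr (t, i')) by
      simp; exact fun hc => hne (by rw [hc])) hii
  have h5 : (Finset.univ.image fun i : Fin 5 => C (Sum.inr (t, i))).card = 5 := by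
    rw [Finset.card_image_of_injective _ hinj]; simp
  have hsub : (Finset.univ.image fun i : Fin 5 => C (Sum.inr (t, i))) ⊆ Xset := by
    intro x hx
    simp only [Finset.mem_image, Finset.mem_univ, true_and] at hx
    obtain ⟨i, rfl⟩ := hx
    exact hcopy i
  have := Finset.card_le_card hsub
  rw [h5] at this
  simp [Xset] at this


/-- The copy-index of a vertex, `none` for core vertices. -/
def psi8 : V8 → Option Idx8 := Sum.elim (fun _ => none) (fun p => some p.1)

lemma walk_psi {S : Set V8} (hfree : ∀ v ∈ S, ∀ i : Fin 5, v ≠ Sum.inl i)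
    {x y : ↥S} (w : (G8.induce S).Walk x y) : psi8 x.1 = psi8 y.1 := by
  induction w with
  | nil => rfl
  | @cons a b c h _ ih =>
    refine Eq.trans ?_ ih
    have hab : G8.Adj a.1 b.1 := h
    obtain ⟨va, hva⟩ := a
    obtain ⟨vb, hvb⟩ := b
    rcases va with i | p
    · exact absurd rfl (hfree _ hva i)
    · rcases vb with i | q
      · exact absurd rfl (hfree _ hvb i)
      · have : p.1 = q.1 := hab.1
        simp [psi8, this]

lemma no_K8_minor : ¬ HasMinor G8 (completeGraph (Fin 8)) := by
  classical
  rintro ⟨B, hne, hconn, hdisj, hadj⟩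
  set P : Fin 8 → Prop := fun j => ∃ i, Sum.inl i ∈ B j with hPdef
  have hdisj' : ∀ {j j' : Fin 8}, j ≠ j' → ∀ {v}, v ∈ B j → v ∈ B j' → False := by
    intro j j' hjj v hv hv'
    exact Set.disjoint_left.mp (hdisj hjj) hv hv'
  -- at most 5 branch sets meet the core
  have hfilter : (Finset.univ.filter P).card ≤ 5 := by
    have hmaps : ∀ j ∈ Finset.univ.filter P,
        (fun j => if h : P j then h.choose else 0) j ∈ (Finset.univ : Finset (Fin 5)) :=
      fun _ _ => Finset.mem_univ _
    have hinj : Set.InjOn (fun j => if h : P j then h.choose else 0)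
        (Finset.univ.filter P) := by
      intro j hj j' hj' heq
      by_contra hne'
      rw [Finset.coe_filter] at hj hj'
      simp only [Set.mem_setOf_eq, Finset.mem_univ, true_and] at hj hj'
      simp only [dif_pos hj, dif_pos hj'] at heq
      exact hdisj' hne' hj.choose_spec (heq ▸ hj'.choose_spec)
    calc (Finset.univ.filter P).card ≤ (Finset.univ : Finset (Fin 5)).card :=
          Finset.card_le_card_of_injOn _ hmaps hinj
      _ = 5 := by simp
  -- every core-free branch set lies in a single copy
  have hlocal : ∀ j : Fin 8, ¬ P j → ∃ t : Idx8, ∀ v ∈ B j, ∃ i, v = Sum.inr (t, i) := by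
    intro j hPj
    have hfree : ∀ v ∈ B j, ∀ i : Fin 5, v ≠ Sum.inl i := by
      intro v hv i hvi
      exact hPj ⟨i, hvi ▸ hv⟩
    obtain ⟨v0, hv0⟩ := hne j
    have hfree0 := hfree v0 hv0
    rcases hv0' : v0 with i | ⟨t, i0⟩
    · exact absurd rfl (hv0' ▸ hfree0 i)
    subst hv0'
    refine ⟨t, fun v hv => ?_⟩
    rcases hv' : v with i | ⟨t', i'⟩
    · exact absurd rfl (hv' ▸ hfree v hv i)
    subst hv'
    have hreach := (hconn j).preconnected ⟨Sum.inr (t', i'), hv⟩ ⟨Sum.inr (t, i0), hv0⟩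
    obtain ⟨w⟩ := hreach
    have := walk_psi hfree w
    simp only [psi8, Sum.elim_inr, Option.some.injEq] at this
    exact ⟨i', by rw [this]⟩
  -- there is a core-free branch set
  have hex : ∃ j0, ¬ P j0 := by
    by_contra hcon
    push_neg at hcon
    have : Finset.univ.filter P = Finset.univ := by
      apply Finset.filter_true_of_mem
      intro j _
      exact hcon j
    rw [this] at hfilter
    simp at hfilter
  obtain ⟨j0, hj0⟩ := hex
  obtain ⟨t0, ht0⟩ := hlocal j0 hj0
  -- all core-free branch sets lie in the copy t0
  have hloc0 : ∀ j, ¬ P j → ∀ v ∈ B j, ∃ i, v = Sum.inr (t0, i) := by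
    intro j hPj v hv
    by_cases hjeq : j = j0
    · subst hjeq; exact ht0 v hv
    · obtain ⟨t, htj⟩ := hlocal j hPj
      obtain ⟨v₁, hv₁, v₂, hv₂, hA⟩ := hadj (show (completeGraph (Fin 8)).Adj j j0 from hjeq)
      obtain ⟨i₁, rfl⟩ := htj v₁ hv₁
      obtain ⟨i₂, rfl⟩ := ht0 v₂ hv₂
      have htt : t = t0 := hA.1
      obtain ⟨i, rfl⟩ := htj v hv
      exact ⟨i, by rw [htt]⟩
  -- the block: core plus copy t0
  set Blk : Set V8 := {v | (∃ i, v = Sum.inl i) ∨ ∃ i, v = Sum.inr (t0, i)} with hBlk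
  set F : Fin 8 → Finset V8 := fun j => (Set.toFinite (B j ∩ Blk)).toFinset with hF
  have hFmem : ∀ j v, v ∈ F j ↔ v ∈ B j ∧ v ∈ Blk := by
    intro j v
    rw [hF]
    simp [Set.Finite.mem_toFinset]
  have hFne : ∀ j, (F j).Nonempty := by
    intro j
    by_cases hj : P j
    · obtain ⟨i, hi⟩ := hj
      exact ⟨Sum.inl i, (hFmem j _).mpr ⟨hi, Or.inl ⟨i, rfl⟩⟩⟩
    · obtain ⟨v, hv⟩ := hne j
      obtain ⟨i, rfl⟩ := hloc0 j hj v hv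
      exact ⟨_, (hFmem j _).mpr ⟨hv, Or.inr ⟨i, rfl⟩⟩⟩
  have hdisjF : ∀ j ∈ (Finset.univ : Finset (Fin 8)), ∀ j' ∈ Finset.univ, j ≠ j' →
      Disjoint (F j) (F j') := by
    intro j _ j' _ hjj
    rw [Finset.disjoint_left]
    intro v hv hv'
    exact hdisj' hjj ((hFmem j v).mp hv).1 ((hFmem j' v).mp hv').1
  -- the block has 10 vertices
  have hsum : (∑ j : Fin 8, (F j).card) ≤ 10 := by
    rw [← Finset.card_biUnion hdisjF]
    have hsub : (Finset.univ.biUnion F) ⊆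
        Finset.univ.image (Sum.elim (Sum.inl : Fin 5 → V8)
          (fun i : Fin 5 => Sum.inr (t0, i))) := by
      intro v hv
      rw [Finset.mem_biUnion] at hv
      obtain ⟨j, _, hj⟩ := hv
      rcases ((hFmem j v).mp hj).2 with ⟨i, rfl⟩ | ⟨i, rfl⟩
      · exact Finset.mem_image.mpr ⟨Sum.inl i, Finset.mem_univ _, rfl⟩
      · exact Finset.mem_image.mpr ⟨Sum.inr i, Finset.mem_univ _, rfl⟩
    calc (Finset.univ.biUnion F).card
        ≤ _ := Finset.card_le_card hsub
      _ ≤ (Finset.univ : Finset (Fin 5 ⊕ Fin 5)).card := Finset.card_image_le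
      _ = 10 := by simp
  have hone : ∀ j, 1 ≤ (F j).card := fun j => Finset.card_pos.mpr (hFne j)
  -- at least 6 branch sets have singleton trace
  set Gd : Finset (Fin 8) := Finset.univ.filter (fun j => (F j).card = 1) with hGd
  have hGd6 : 6 ≤ Gd.card := by
    have h1 : ∀ j : Fin 8, (if (F j).card = 1 then 1 else 2) ≤ (F j).card := by
      intro j
      have := hone j
      split <;> omega
    have h2 : (∑ j : Fin 8, (if (F j).card = 1 then 1 else 2)) ≤ ∑ j : Fin 8, (F j).card :=
      Finset.sum_le_sum (fun j _ => h1 j)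
    rw [Finset.sum_ite, Finset.sum_const, Finset.sum_const] at h2
    have h3 : (Finset.univ.filter (fun j => (F j).card = 1)).card
        + (Finset.univ.filter (fun j => ¬ (F j).card = 1)).card = 8 := by
      rw [Finset.card_filter_add_card_filter_not]
      simp
    rw [hGd]
    simp only [smul_eq_mul, mul_one] at h2
    omega
  -- pigeonhole: two singleton traces share the same pair index
  set rep : Fin 8 → V8 := fun j => (hFne j).choose with hrep0
  have hrep : ∀ j, rep j ∈ F j := fun j => (hFne j).choose_spec
  set ρ : V8 → Fin 5 := Sum.elim id Prod.snd with hρ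
  obtain ⟨j, hj, j', hj', hjj, hgg⟩ :=
    Finset.exists_ne_map_eq_of_card_lt_of_maps_to (s := Gd)
      (t := (Finset.univ : Finset (Fin 5))) (f := fun j => ρ (rep j))
      (by simp only [Finset.card_univ, Fintype.card_fin]; omega)
      (fun a _ => Finset.mem_univ _)
  have hsingle : ∀ a ∈ Gd, F a = {rep a} := by
    intro a ha
    rw [hGd] at ha
    simp only [Finset.mem_filter] at ha
    obtain ⟨u, hu⟩ := Finset.card_eq_one.mp ha.2
    have := hrep a
    rw [hu] at this ⊢
    rw [Finset.mem_singleton] at this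
    rw [this]
  have hFj := hsingle j hj
  have hFj' := hsingle j' hj'
  -- key contradiction for a core-singleton vs copy-singleton pair
  have key : ∀ a a' : Fin 8, a ≠ a' → ∀ i : Fin 5, F a = {Sum.inl i} →
      F a' = {Sum.inr (t0, i)} → False := by
    intro a a' haa i hFa hFa'
    have hPa' : ¬ P a' := by
      rintro ⟨m, hm⟩
      have h1 : Sum.inl m ∈ F a' := (hFmem a' _).mpr ⟨hm, Or.inl ⟨m, rfl⟩⟩
      rw [hFa'] at h1
      simp at h1
    obtain ⟨v₁, hv₁, v₂, hv₂, hA⟩ := hadj (show (completeGraph (Fin 8)).Adj a a' from haa)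
    obtain ⟨i₂, rfl⟩ := hloc0 a' hPa' v₂ hv₂
    have hv₂F : Sum.inr (t0, i₂) ∈ F a' := (hFmem a' _).mpr ⟨hv₂, Or.inr ⟨i₂, rfl⟩⟩
    rw [hFa', Finset.mem_singleton] at hv₂F
    rw [hv₂F] at hA
    rcases hv1' : v₁ with m | ⟨t, m⟩ <;> rw [hv1'] at hA hv₁
    · have h2 : Sum.inl m ∈ F a := (hFmem a _).mpr ⟨hv₁, Or.inl ⟨m, rfl⟩⟩
      rw [hFa, Finset.mem_singleton, Sum.inl.injEq] at h2
      exact hA h2.symm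
    · have htt : t = t0 := hA.1
      have h2 : Sum.inr (t, m) ∈ F a := (hFmem a _).mpr ⟨hv₁, Or.inr ⟨m, by rw [htt]⟩⟩
      rw [hFa, Finset.mem_singleton] at h2
      simp at h2
  -- analyse the two colliding singletons
  have hrepj : rep j ∈ B j ∧ rep j ∈ Blk := (hFmem j _).mp (hrep j)
  have hrepj' : rep j' ∈ B j' ∧ rep j' ∈ Blk := (hFmem j' _).mp (hrep j')
  have hrepne : rep j ≠ rep j' := by
    intro he
    exact hdisj' hjj hrepj.1 (he ▸ hrepj'.1)
  rcases hrepj.2 with ⟨i, hi⟩ | ⟨i, hi⟩ <;> rcases hrepj'.2 with ⟨i', hi'⟩ | ⟨i', hi'⟩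
  · rw [hi, hi'] at hgg hrepne
    simp only [hρ, Sum.elim_inl, id_eq] at hgg
    exact hrepne (by rw [hgg])
  · rw [hi, hi'] at hgg
    simp only [hρ, Sum.elim_inl, Sum.elim_inr, id_eq] at hgg
    exact key j j' hjj i (by rw [hFj, hi]) (by rw [hFj', hi', ← hgg])
  · rw [hi, hi'] at hgg
    simp only [hρ, Sum.elim_inl, Sum.elim_inr, id_eq] at hgg
    exact key j' j hjj.symm i' (by rw [hFj', hi']) (by rw [hFj, hi, hgg])
  · rw [hi, hi'] at hgg hrepne
    simp only [hρ, Sum.elim_inr] at hgg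
    exact hrepne (by rw [hgg])

/-- There is a $K_8$-minor-free graph that is not $8$-choosable: the List Hadwiger
Conjecture fails for $t = 8$. -/
theorem list_hadwiger_fails_at_8 :
    ∃ (V : Type) (_ : Fintype V) (G : SimpleGraph V),
      ¬ HasMinor G (completeGraph (Fin 8)) ∧ ¬ Choosable G 8 :=
  ⟨V8, inferInstance, G8, no_K8_minor, not_choosable8⟩
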